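/- Let r1td, r2td, r1no, r2no, L1, L2 be positive reals with λ := r1no/r1td + r2no/r2td - 1 ≥ 0. Then the optimal value of the LP minimizing t1 + t_no + t2 subject to t1·r1td + t_no·r1no = L1, t2·r2td + t_no·r2no = L2, t1, t2, t_no ≥ 0 equals L1/r1td + L2/r2td - λ·min(L1/r1no, L2/r2no), attained at t_no = min(L1/r1no, L2/r2no). -/

import Mathlib

/-- optimal LP value when the NOMA priority is nonnegative,
attained at `t_no = min(L1/r1no, L2/r2no)`. -/
theorem stmt_2 (r1td r2td r1no r2no L1 L2 : ℝ)
    (hr1td : 0 < r1td) (hr2td : 0 < r2td) (hr1no : 0 < r1no) (hr2no : 0 < r2no)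
    (hL1 : 0 < L1) (hL2 : 0 < L2)
    (hlam : 0 ≤ r1no / r1td + r2no / r2td - 1) :
    IsLeast {v : ℝ | ∃ t1 t2 tno : ℝ, 0 ≤ t1 ∧ 0 ≤ t2 ∧ 0 ≤ tno ∧
        t1 * r1td + tno * r1no = L1 ∧ t2 * r2td + tno * r2no = L2 ∧
        v = t1 + tno + t2}
      (L1 / r1td + L2 / r2td -
        (r1no / r1td + r2no / r2td - 1) * min (L1 / r1no) (L2 / r2no)) ∧
    (∃ t1 t2 : ℝ, 0 ≤ t1 ∧ 0 ≤ t2 ∧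
      t1 * r1td + min (L1 / r1no) (L2 / r2no) * r1no = L1 ∧
      t2 * r2td + min (L1 / r1no) (L2 / r2no) * r2no = L2 ∧
      t1 + min (L1 / r1no) (L2 / r2no) + t2 =
        L1 / r1td + L2 / r2td -
          (r1no / r1td + r2no / r2td - 1) * min (L1 / r1no) (L2 / r2no)) := by
  set m := min (L1 / r1no) (L2 / r2no) with hm
  have hm1 : m * r1no ≤ L1 := by
    have := min_le_left (L1 / r1no) (L2 / r2no)
    rw [← hm] at this
    calc m * r1no ≤ (L1 / r1no) * r1no := by nlinarith
    _ = L1 := by field_simp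
  have hm2 : m * r2no ≤ L2 := by
    have := min_le_right (L1 / r1no) (L2 / r2no)
    rw [← hm] at this
    calc m * r2no ≤ (L2 / r2no) * r2no := by nlinarith
    _ = L2 := by field_simp
  have hmpos : 0 < m := lt_min (by positivity) (by positivity)
  have hwit : ∃ t1 t2 : ℝ, 0 ≤ t1 ∧ 0 ≤ t2 ∧
      t1 * r1td + m * r1no = L1 ∧ t2 * r2td + m * r2no = L2 ∧
      t1 + m + t2 = L1 / r1td + L2 / r2td - (r1no / r1td + r2no / r2td - 1) * m := by
    refine ⟨(L1 - m * r1no) / r1td, (L2 - m * r2no) / r2td, div_nonneg (by linarith) hr1td.le, div_nonneg (by linarith) hr2td.le,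
      by field_simp; ring, by field_simp; ring, by field_simp; ring⟩
  constructor
  · constructor
    · obtain ⟨t1, t2, h1, h2, e1, e2, hv⟩ := hwit
      exact ⟨t1, t2, m, h1, h2, hmpos.le, e1, e2, hv.symm⟩
    · rintro v ⟨t1, t2, tno, h1, h2, h3, e1, e2, rfl⟩
      have ht1 : t1 = (L1 - tno * r1no) / r1td := by field_simp; linarith
      have ht2 : t2 = (L2 - tno * r2no) / r2td := by field_simp; linarith
      have htno : tno ≤ m := by
        apply le_min
        · rw [le_div_iff₀ hr1no]; nlinarith
        · rw [le_div_iff₀ hr2no]; nlinarith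
      have hkey : t1 + tno + t2 =
          L1 / r1td + L2 / r2td - (r1no / r1td + r2no / r2td - 1) * tno := by
        rw [ht1, ht2]; field_simp; ring
      rw [hkey]
      nlinarith [mul_le_mul_of_nonneg_left htno hlam]
  · exact hwit
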